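/- Let d ≥ 1 and let F : ℝ^d → ℝ be Lipschitz continuous and differentiable at a point x ∈ ℝ^d. For σ > 0 let μ_σ denote the centered isotropic Gaussian probability measure on ℝ^d with covariance σ²·I. Then for every coordinate i ∈ {1,…,d}, (1/σ²)·∫ zᵢ·F(x+z) dμ_σ(z) converges to the partial derivative ∂F/∂xᵢ(x) as σ → 0⁺. -/

import Mathlib

open MeasureTheory ProbabilityTheory Filter Topology

open Real


-- 1D gaussian pdf rewrite
lemma gpdf_eq (y : ℝ) :
    gaussianPDFReal 0 1 y = (Real.sqrt (2 * π))⁻¹ * Real.exp (-(1/2) * y ^ 2) := by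
  simp only [gaussianPDFReal, NNReal.coe_one, mul_one, sub_zero]
  ring_nf

-- IBP: second moment of the density
lemma int_sq_exp : ∫ y : ℝ, y * (y * Real.exp (-(1/2) * y ^ 2)) = Real.sqrt (2 * π) := by
  have hb : (0:ℝ) < 1/2 := by norm_num
  have hv : ∀ y : ℝ, HasDerivAt (fun t : ℝ => -Real.exp (-(1/2) * t ^ 2))
      (y * Real.exp (-(1/2) * y ^ 2)) y := by
    intro y
    have h1 : HasDerivAt (fun t : ℝ => -(1/2) * t ^ 2) (-(1/2) * (2 * y ^ 1)) y :=
      (hasDerivAt_pow 2 y).const_mul _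
    have : HasDerivAt (fun t : ℝ => -Real.exp (-(1/2) * t ^ 2))
        (-(Real.exp (-(1/2) * y ^ 2) * (-(1/2) * (2 * y ^ 1)))) y := (h1.exp).neg
    convert this using 1
    ring
  have hu : ∀ y : ℝ, HasDerivAt (fun t : ℝ => t) (1:ℝ) y := fun y => hasDerivAt_id y
  have hint2 : Integrable (fun y : ℝ => y ^ 2 * Real.exp (-(1/2) * y ^ 2)) := by
    have := integrable_rpow_mul_exp_neg_mul_sq hb (s := 2) (by norm_num)
    simpa [Real.rpow_natCast] using this
  have huv' : Integrable ((fun t : ℝ => t) * fun y : ℝ => y * Real.exp (-(1/2) * y ^ 2)) := by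
    apply hint2.congr
    filter_upwards with y
    simp [Pi.mul_apply]; ring
  have hu'v : Integrable ((fun _ : ℝ => (1:ℝ)) * fun t : ℝ => -Real.exp (-(1/2) * t ^ 2)) := by
    apply (integrable_exp_neg_mul_sq hb).neg.congr
    filter_upwards with y; simp [Pi.mul_apply]
  have huv : Integrable ((fun t : ℝ => t) * fun t : ℝ => -Real.exp (-(1/2) * t ^ 2)) := by
    apply (integrable_mul_exp_neg_mul_sq hb).neg.congr
    filter_upwards with y
    simp only [Pi.mul_apply, Pi.neg_apply]
    ring
  have := integral_mul_deriv_eq_deriv_mul_of_integrable (fun y _ => hu y) (fun y _ => hv y) huv' hu'v huv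
  rw [this]
  have : ∫ y : ℝ, (1:ℝ) * -Real.exp (-(1/2) * y ^ 2) = -Real.sqrt (2*π) := by
    simp only [one_mul]
    rw [integral_neg]
    have := integral_gaussian (1/2)
    rw [this, show π/(1/2) = 2*π by ring]
  rw [this, neg_neg]

lemma tendsto_negexp_atTop : Tendsto (fun y : ℝ => -Real.exp (-(1/2) * y ^ 2)) atTop (𝓝 0) := by
  rw [show (0:ℝ) = -0 by norm_num]
  apply Tendsto.neg
  apply Real.tendsto_exp_atBot.comp
  exact tendsto_neg_const_mul_pow_atTop (by norm_num) (by norm_num)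

lemma tendsto_negexp_atBot : Tendsto (fun y : ℝ => -Real.exp (-(1/2) * y ^ 2)) atBot (𝓝 0) := by
  have := tendsto_negexp_atTop.comp tendsto_neg_atBot_atTop
  simpa [Function.comp_def, neg_pow] using this

lemma integrable_mul_exp' : Integrable (fun y : ℝ => y * Real.exp (-(1/2) * y ^ 2)) :=
  integrable_mul_exp_neg_mul_sq (by norm_num)

lemma int_id_exp : ∫ y : ℝ, y * Real.exp (-(1/2) * y ^ 2) = 0 := by
  have hv : ∀ y : ℝ, HasDerivAt (fun t : ℝ => -Real.exp (-(1/2) * t ^ 2))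
      (y * Real.exp (-(1/2) * y ^ 2)) y := by
    intro y
    have h1 : HasDerivAt (fun t : ℝ => -(1/2) * t ^ 2) (-(1/2) * (2 * y ^ 1)) y :=
      (hasDerivAt_pow 2 y).const_mul _
    have : HasDerivAt (fun t : ℝ => -Real.exp (-(1/2) * t ^ 2))
        (-(Real.exp (-(1/2) * y ^ 2) * (-(1/2) * (2 * y ^ 1)))) y := (h1.exp).neg
    convert this using 1
    ring
  have := integral_of_hasDerivAt_of_tendsto hv integrable_mul_exp'
    tendsto_negexp_atBot tendsto_negexp_atTop
  simpa using this

lemma gr_eq : gaussianReal 0 1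
    = (volume : Measure ℝ).withDensity fun y => ((gaussianPDFReal 0 1 y).toNNReal : ENNReal) := by
  rw [gaussianReal_of_var_ne_zero 0 one_ne_zero]
  rfl

lemma gpdf_meas : Measurable fun y => (gaussianPDFReal 0 1 y).toNNReal :=
  (measurable_gaussianPDFReal 0 1).real_toNNReal

lemma gauss_integral (g : ℝ → ℝ) :
    ∫ y, g y ∂(gaussianReal 0 1) = ∫ y, gaussianPDFReal 0 1 y * g y := by
  rw [gr_eq, integral_withDensity_eq_integral_smul gpdf_meas]
  congr 1
  ext y
  simp [NNReal.smul_def, Real.coe_toNNReal _ (gaussianPDFReal_nonneg 0 1 y)]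

lemma gauss_integrable_iff (g : ℝ → ℝ) :
    Integrable g (gaussianReal 0 1) ↔ Integrable (fun y => gaussianPDFReal 0 1 y * g y) := by
  rw [gr_eq, integrable_withDensity_iff_integrable_smul gpdf_meas]
  constructor <;> intro h <;> apply h.congr <;> filter_upwards with y <;>
    simp [NNReal.smul_def, Real.coe_toNNReal _ (gaussianPDFReal_nonneg 0 1 y)]

lemma g1_integrable_id : Integrable (fun y : ℝ => y) (gaussianReal 0 1) := by
  rw [gauss_integrable_iff]
  apply (integrable_mul_exp'.const_mul (Real.sqrt (2 * π))⁻¹).congr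
  filter_upwards with y
  rw [gpdf_eq]
  ring

lemma g1_integrable_sq : Integrable (fun y : ℝ => y ^ 2) (gaussianReal 0 1) := by
  rw [gauss_integrable_iff]
  have hint2 : Integrable (fun y : ℝ => y ^ 2 * Real.exp (-(1/2) * y ^ 2)) := by
    have := integrable_rpow_mul_exp_neg_mul_sq (by norm_num : (0:ℝ) < 1/2) (s := 2) (by norm_num)
    simpa [Real.rpow_natCast] using this
  apply (hint2.const_mul (Real.sqrt (2 * π))⁻¹).congr
  filter_upwards with y
  rw [gpdf_eq]
  ring

lemma g1_int_id : ∫ y, y ∂(gaussianReal 0 1) = 0 := by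
  rw [gauss_integral]
  have : ∀ y : ℝ, gaussianPDFReal 0 1 y * y
      = (Real.sqrt (2 * π))⁻¹ * (y * Real.exp (-(1/2) * y ^ 2)) := by
    intro y; rw [gpdf_eq]; ring
  simp_rw [this]
  rw [integral_const_mul, int_id_exp, mul_zero]

lemma g1_int_sq : ∫ y, y ^ 2 ∂(gaussianReal 0 1) = 1 := by
  rw [gauss_integral]
  have : ∀ y : ℝ, gaussianPDFReal 0 1 y * y ^ 2
      = (Real.sqrt (2 * π))⁻¹ * (y * (y * Real.exp (-(1/2) * y ^ 2))) := by
    intro y; rw [gpdf_eq]; ring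
  simp_rw [this]
  rw [integral_const_mul, int_sq_exp]
  rw [inv_mul_cancel₀]
  positivity

section Pi
variable {d : ℕ}

lemma sigf : SigmaFinite (gaussianReal 0 1) := inferInstance

lemma pi_integral_prod (f : Fin d → ℝ → ℝ) :
    ∫ w, ∏ k, f k (w k) ∂(Measure.pi fun _ : Fin d => gaussianReal 0 1)
      = ∏ k, ∫ y, f k y ∂(gaussianReal 0 1) := by
  letI : MeasureSpace ℝ := ⟨gaussianReal 0 1⟩
  haveI : SigmaFinite (volume : Measure ℝ) := sigf
  exact MeasureTheory.integral_fintype_prod_eq_prod (fun k => f k)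

lemma pi_integrable_prod (f : Fin d → ℝ → ℝ)
    (hf : ∀ k, Integrable (f k) (gaussianReal 0 1)) :
    Integrable (fun w : Fin d → ℝ => ∏ k, f k (w k))
      (Measure.pi fun _ : Fin d => gaussianReal 0 1) := by
  letI : MeasureSpace ℝ := ⟨gaussianReal 0 1⟩
  haveI : SigmaFinite (volume : Measure ℝ) := sigf
  exact Integrable.fintype_prod (f := f) hf

lemma g1_integrable_mul : Integrable (fun y : ℝ => y * y) (gaussianReal 0 1) := by
  apply g1_integrable_sq.congr
  filter_upwards with y
  ring

lemma prod_ite_one (i : Fin d) (w : Fin d → ℝ) :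
    (∏ k, if k = i then w k else 1) = w i := by
  simp [Finset.prod_ite_eq']

lemma prod_ite_two (i j : Fin d) (w : Fin d → ℝ) :
    (∏ k, (if k = i then w k else 1) * (if k = j then w k else 1)) = w i * w j := by
  rw [Finset.prod_mul_distrib]
  simp [Finset.prod_ite_eq']

lemma g1_ite_integrable (i j k : Fin d) :
    Integrable (fun y : ℝ => (if k = i then y else 1) * (if k = j then y else 1))
      (gaussianReal 0 1) := by
  by_cases hki : k = i <;> by_cases hkj : k = j
  · have : (fun y : ℝ => (if k = i then y else 1) * (if k = j then y else 1))
        = fun y => y * y := by funext y; rw [if_pos hki, if_pos hkj]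
    rw [this]; exact g1_integrable_mul
  · have : (fun y : ℝ => (if k = i then y else 1) * (if k = j then y else 1))
        = fun y => y := by funext y; rw [if_pos hki, if_neg hkj, mul_one]
    rw [this]; exact g1_integrable_id
  · have : (fun y : ℝ => (if k = i then y else 1) * (if k = j then y else 1))
        = fun y => y := by funext y; rw [if_neg hki, if_pos hkj, one_mul]
    rw [this]; exact g1_integrable_id
  · have : (fun y : ℝ => (if k = i then y else 1) * (if k = j then y else 1))
        = fun _ => (1:ℝ) := by funext y; rw [if_neg hki, if_neg hkj, mul_one]
    rw [this]; exact integrable_const 1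

lemma pi_integrable_mul (i j : Fin d) :
    Integrable (fun w : Fin d → ℝ => w i * w j)
      (Measure.pi fun _ : Fin d => gaussianReal 0 1) := by
  have h := pi_integrable_prod
    (fun k y => (if k = i then y else 1) * (if k = j then y else 1))
    (fun k => g1_ite_integrable i j k)
  exact h.congr (Filter.Eventually.of_forall fun w => prod_ite_two i j w)

lemma pi_integrable_single (i : Fin d) :
    Integrable (fun w : Fin d → ℝ => w i)
      (Measure.pi fun _ : Fin d => gaussianReal 0 1) := by
  have h := pi_integrable_prod (fun k y => if k = i then y else 1) (fun k => ?_)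
  · exact h.congr (Filter.Eventually.of_forall fun w => prod_ite_one i w)
  · show Integrable (fun y : ℝ => if k = i then y else 1) (gaussianReal 0 1)
    by_cases hki : k = i
    · have : (fun y : ℝ => if k = i then y else 1) = fun y => y := by
        funext y; rw [if_pos hki]
      rw [this]; exact g1_integrable_id
    · have : (fun y : ℝ => if k = i then y else 1) = fun _ => (1:ℝ) := by
        funext y; rw [if_neg hki]
      rw [this]; exact integrable_const 1

lemma pi_int_single (i : Fin d) :
    ∫ w, w i ∂(Measure.pi fun _ : Fin d => gaussianReal 0 1) = 0 := by
  have h := pi_integral_prod (fun k y => if k = i then y else 1)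
  simp_rw [prod_ite_one i] at h
  rw [h]
  apply Finset.prod_eq_zero (Finset.mem_univ i)
  simp only [ite_true, if_pos rfl]
  exact g1_int_id

lemma pi_int_mul (i j : Fin d) :
    ∫ w, w i * w j ∂(Measure.pi fun _ : Fin d => gaussianReal 0 1)
      = if i = j then 1 else 0 := by
  have h := pi_integral_prod (fun k y => (if k = i then y else 1) * (if k = j then y else 1))
  simp_rw [prod_ite_two i j] at h
  rw [h]
  by_cases hij : i = j
  · subst hij
    rw [if_pos rfl]
    apply Finset.prod_eq_one
    intro k _
    by_cases hki : k = i
    · have : (fun y : ℝ => (if k = i then y else 1) * (if k = i then y else 1))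
          = fun y : ℝ => y ^ 2 := by funext y; rw [if_pos hki]; ring
      rw [this]; exact g1_int_sq
    · have : (fun y : ℝ => (if k = i then y else 1) * (if k = i then y else 1))
          = fun _ => (1:ℝ) := by funext y; rw [if_neg hki]; ring
      rw [this]
      simp
  · rw [if_neg hij]
    apply Finset.prod_eq_zero (Finset.mem_univ i)
    have : (fun y : ℝ => (if i = i then y else 1) * (if i = j then y else 1))
        = fun y : ℝ => y := by funext y; rw [if_pos rfl, if_neg hij, mul_one]
    rw [this]
    exact g1_int_id

end Pi

section Main
variable {d : ℕ}

lemma pi_norm_sq_le (w : Fin d → ℝ) : ‖w‖ * ‖w‖ ≤ ∑ j, (w j) ^ 2 := by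
  have hS : (0:ℝ) ≤ ∑ j, (w j) ^ 2 := Finset.sum_nonneg fun j _ => sq_nonneg _
  have h1 : ‖w‖ ≤ Real.sqrt (∑ j, (w j) ^ 2) := by
    rw [pi_norm_le_iff_of_nonneg (Real.sqrt_nonneg _)]
    intro j
    rw [Real.norm_eq_abs, ← Real.sqrt_sq_eq_abs]
    exact Real.sqrt_le_sqrt (Finset.single_le_sum (fun k _ => sq_nonneg (w k)) (Finset.mem_univ j))
  calc ‖w‖ * ‖w‖ ≤ Real.sqrt (∑ j, (w j) ^ 2) * Real.sqrt (∑ j, (w j) ^ 2) :=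
        mul_le_mul h1 h1 (norm_nonneg _) (Real.sqrt_nonneg _)
    _ = ∑ j, (w j) ^ 2 := Real.mul_self_sqrt hS

lemma pi_integrable_sumsq :
    Integrable (fun w : Fin d → ℝ => ∑ j, (w j) ^ 2)
      (Measure.pi fun _ : Fin d => gaussianReal 0 1) := by
  apply integrable_finset_sum
  intro j _
  apply (pi_integrable_mul j j).congr
  filter_upwards with w
  ring

lemma map_scale (d : ℕ) {σ : ℝ} (hσ : 0 < σ) :
    (Measure.pi fun _ : Fin d => gaussianReal 0 (Real.toNNReal (σ ^ 2)))
      = Measure.map (fun w : Fin d → ℝ => σ • w)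
          (Measure.pi fun _ : Fin d => gaussianReal 0 1) := by
  have h1 : (gaussianReal 0 1).map (σ * ·) = gaussianReal 0 (Real.toNNReal (σ ^ 2)) := by
    rw [gaussianReal_map_const_mul σ]
    congr 1
    · ring
    · ext
      simp [Real.coe_toNNReal _ (sq_nonneg σ)]
  have h2 := measurePreserving_pi (fun _ : Fin d => gaussianReal 0 1)
    (fun _ : Fin d => gaussianReal 0 (Real.toNNReal (σ ^ 2)))
    (f := fun _ : Fin d => (σ * ·)) (fun _ => ⟨(measurable_id.const_mul σ), h1⟩)
  have h3 := h2.map_eq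
  rw [← h3]
  rfl

lemma slope_tendsto (F : (Fin d → ℝ) → ℝ) (x w : Fin d → ℝ)
    (hdiff : DifferentiableAt ℝ F x) :
    Tendsto (fun σ : ℝ => (F (x + σ • w) - F x) / σ) (𝓝[>] 0)
      (𝓝 (fderiv ℝ F x w)) := by
  have h1 : HasDerivAt (fun t : ℝ => t • w) ((1:ℝ) • w) 0 := (hasDerivAt_id 0).smul_const w
  have h0 : HasDerivAt (fun t : ℝ => x + t • w) w 0 := by simpa using h1.const_add x
  have e : x + (0:ℝ) • w = x := by simp
  have hF : HasFDerivAt F (fderiv ℝ F x) (x + (0:ℝ) • w) := by rw [e]; exact hdiff.hasFDerivAt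
  have h2 : HasDerivAt (fun t : ℝ => F (x + t • w)) (fderiv ℝ F x w) 0 := by
    have := hF.comp_hasDerivAt 0 h0
    exact this
  have h3 := hasDerivAt_iff_tendsto_slope.mp h2
  have h4 : Tendsto (slope (fun t : ℝ => F (x + t • w)) 0) (𝓝[>] 0)
      (𝓝 (fderiv ℝ F x w)) :=
    h3.mono_left (nhdsWithin_mono 0 fun y hy => ne_of_gt hy)
  apply h4.congr'
  filter_upwards [self_mem_nhdsWithin] with σ hσ
  rw [slope_def_field]
  simp

lemma fderiv_rep (F : (Fin d → ℝ) → ℝ) (x : Fin d → ℝ) (w : Fin d → ℝ) :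
    fderiv ℝ F x w = ∑ j, w j * fderiv ℝ F x (Pi.single j 1) := by
  have hw : w = ∑ j, w j • (Pi.single j 1 : Fin d → ℝ) := by
    have : ∀ j, w j • (Pi.single j 1 : Fin d → ℝ) = Pi.single j (w j) := by
      intro j
      rw [← Pi.single_smul, smul_eq_mul, mul_one]
    simp_rw [this]
    exact (Finset.univ_sum_single w).symm
  conv_lhs => rw [hw]
  rw [map_sum]
  congr 1
  funext j
  rw [_root_.map_smul, smul_eq_mul]

end Main

/-- For a Lipschitz function `F : ℝ^d → ℝ` differentiable at `x`, the Gaussian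
covariance ratio `(1/σ²)·∫ zᵢ·F(x+z) dμ_σ(z)` — where `μ_σ` is the centered
isotropic Gaussian with covariance `σ²·I` — converges to the partial derivative
`∂F/∂xᵢ(x)` as the bandwidth `σ` tends to `0⁺`. -/
theorem gaussian_slope_tendsto_partial_derivative
    (d : ℕ) (hd : 1 ≤ d) (F : (Fin d → ℝ) → ℝ)
    (hLip : ∃ K : NNReal, LipschitzWith K F)
    (x : Fin d → ℝ) (hdiff : DifferentiableAt ℝ F x)
    (i : Fin d) :
    Tendsto
      (fun σ : ℝ =>
        (1 / σ ^ 2) *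
          ∫ z, z i * F (x + z)
            ∂(Measure.pi fun _ : Fin d =>
                gaussianReal 0 (Real.toNNReal (σ ^ 2))))
      (𝓝[>] 0) (𝓝 (fderiv ℝ F x (Pi.single i 1))) := by
  obtain ⟨K, hK⟩ := hLip
  have hFc : Continuous F := hK.continuous
  set Γ : Measure (Fin d → ℝ) := Measure.pi fun _ : Fin d => gaussianReal 0 1 with hΓ
  set L : (Fin d → ℝ) →L[ℝ] ℝ := fderiv ℝ F x with hLdef
  have hmeas1 : ∀ σ : ℝ, Continuous (fun w : Fin d → ℝ => w i * F (x + σ • w)) := by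
    intro σ
    exact (continuous_apply i).mul (hFc.comp (continuous_const.add (continuous_id.const_smul σ)))
  have hFbound : ∀ (σ : ℝ) (w : Fin d → ℝ),
      |F (x + σ • w) - F x| ≤ (K:ℝ) * (|σ| * ‖w‖) := by
    intro σ w
    have h := hK.dist_le_mul (x + σ • w) x
    rw [Real.dist_eq] at h
    calc |F (x + σ • w) - F x| ≤ (K:ℝ) * dist (x + σ • w) x := h
      _ = (K:ℝ) * (|σ| * ‖w‖) := by
          rw [dist_eq_norm]
          congr 1
          rw [add_sub_cancel_left, norm_smul, Real.norm_eq_abs]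
  have habs_i : ∀ w : Fin d → ℝ, |w i| ≤ ‖w‖ := by
    intro w; simpa [Real.norm_eq_abs] using norm_le_pi_norm w i
  have hprod_le : ∀ w : Fin d → ℝ, |w i| * ‖w‖ ≤ ∑ j, (w j) ^ 2 := fun w =>
    le_trans (mul_le_mul_of_nonneg_right (habs_i w) (norm_nonneg w)) (pi_norm_sq_le w)
  have hInt1 : ∀ σ : ℝ, Integrable (fun w : Fin d → ℝ => w i * F (x + σ • w)) Γ := by
    intro σ
    apply Integrable.mono'
      (g := fun w : Fin d → ℝ => |F x| * |w i| + ((K:ℝ) * |σ|) * ∑ j, (w j) ^ 2)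
    · exact ((pi_integrable_single i).abs.const_mul _).add (pi_integrable_sumsq.const_mul _)
    · exact (hmeas1 σ).aestronglyMeasurable
    · filter_upwards with w
      have h1 : |F (x + σ • w)| ≤ |F x| + (K:ℝ) * (|σ| * ‖w‖) := by
        have hb := hFbound σ w
        have he : F (x + σ • w) = F x + (F (x + σ • w) - F x) := by ring
        calc |F (x + σ • w)| = |F x + (F (x + σ • w) - F x)| := by rw [← he]
          _ ≤ |F x| + |F (x + σ • w) - F x| := abs_add_le _ _
          _ ≤ |F x| + (K:ℝ) * (|σ| * ‖w‖) := by linarith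
      have hKσ : (0:ℝ) ≤ (K:ℝ) * |σ| := mul_nonneg K.coe_nonneg (abs_nonneg σ)
      rw [Real.norm_eq_abs, abs_mul]
      calc |w i| * |F (x + σ • w)| ≤ |w i| * (|F x| + (K:ℝ) * (|σ| * ‖w‖)) :=
            mul_le_mul_of_nonneg_left h1 (abs_nonneg _)
        _ = |F x| * |w i| + ((K:ℝ) * |σ|) * (|w i| * ‖w‖) := by ring
        _ ≤ |F x| * |w i| + ((K:ℝ) * |σ|) * ∑ j, (w j) ^ 2 := by
            have := mul_le_mul_of_nonneg_left (hprod_le w) hKσ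
            linarith
  have hstep1 : ∀ σ : ℝ, 0 < σ →
      (1 / σ ^ 2) * ∫ z, z i * F (x + z)
          ∂(Measure.pi fun _ : Fin d => gaussianReal 0 (Real.toNNReal (σ ^ 2)))
        = ∫ w, w i * ((F (x + σ • w) - F x) / σ) ∂Γ := by
    intro σ hσ
    have hσ0 : σ ≠ 0 := ne_of_gt hσ
    rw [map_scale d hσ, integral_map]
    rotate_left
    · exact (measurable_pi_lambda (fun w : Fin d → ℝ => σ • w)
        (fun j => by have := (measurable_pi_apply (X := fun _ : Fin d => ℝ) j).const_mul σ; exact this)).aemeasurable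
    · exact ((continuous_apply i).mul
        (hFc.comp (continuous_const.add continuous_id))).aestronglyMeasurable
    have e1 : ∀ w : Fin d → ℝ, (σ • w) i * F (x + σ • w) = σ * (w i * F (x + σ • w)) := by
      intro w
      rw [Pi.smul_apply, smul_eq_mul, mul_assoc]
    simp_rw [e1]
    rw [integral_const_mul]
    have hInt2 : Integrable (fun w : Fin d → ℝ => w i * F x) Γ :=
      (pi_integrable_single i).mul_const (F x)
    have e2 : ∀ w : Fin d → ℝ, w i * ((F (x + σ • w) - F x) / σ)
        = (1/σ) * (w i * F (x + σ • w)) - (1/σ) * (w i * F x) := by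
      intro w
      field_simp
    simp_rw [e2]
    rw [integral_sub ((hInt1 σ).const_mul _) (hInt2.const_mul _),
      integral_const_mul, integral_const_mul]
    have hz : ∫ w, w i * F x ∂Γ = 0 := by
      rw [integral_mul_const, pi_int_single i, zero_mul]
    rw [hz, mul_zero, sub_zero]
    field_simp
    ring
  have hDCT : Tendsto (fun σ : ℝ => ∫ w, w i * ((F (x + σ • w) - F x) / σ) ∂Γ)
      (𝓝[>] 0) (𝓝 (∫ w, w i * L w ∂Γ)) := by
    apply tendsto_integral_filter_of_dominated_convergence
      (bound := fun w : Fin d → ℝ => (K:ℝ) * ∑ j, (w j) ^ 2)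
    · filter_upwards with σ
      exact ((continuous_apply i).mul
        (((hFc.comp (continuous_const.add (continuous_id.const_smul σ))).sub
          continuous_const).div_const σ)).aestronglyMeasurable
    · filter_upwards [self_mem_nhdsWithin] with σ hσ
      filter_upwards with w
      have hσ' : (0:ℝ) < σ := hσ
      have h1 := hFbound σ w
      rw [abs_of_pos hσ'] at h1
      have h2 : |F (x + σ • w) - F x| / σ ≤ (K:ℝ) * ‖w‖ := by
        rw [div_le_iff₀ hσ']
        calc |F (x + σ • w) - F x| ≤ (K:ℝ) * (σ * ‖w‖) := h1
          _ = (K:ℝ) * ‖w‖ * σ := by ring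
      rw [Real.norm_eq_abs, abs_mul, abs_div, abs_of_pos hσ']
      calc |w i| * (|F (x + σ • w) - F x| / σ) ≤ |w i| * ((K:ℝ) * ‖w‖) :=
            mul_le_mul_of_nonneg_left h2 (abs_nonneg _)
        _ = (K:ℝ) * (|w i| * ‖w‖) := by ring
        _ ≤ (K:ℝ) * ∑ j, (w j) ^ 2 :=
            mul_le_mul_of_nonneg_left (hprod_le w) K.coe_nonneg
    · exact pi_integrable_sumsq.const_mul _
    · filter_upwards with w
      exact (slope_tendsto F x w hdiff).const_mul (w i)
  have hfinal : ∫ w, w i * L w ∂Γ = L (Pi.single i 1) := by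
    have e : ∀ w : Fin d → ℝ, w i * L w = ∑ j, L (Pi.single j 1) * (w i * w j) := by
      intro w
      rw [show L w = ∑ j, w j * L (Pi.single j 1) from fderiv_rep F x w, Finset.mul_sum]
      congr 1
      funext j
      ring
    simp_rw [e]
    rw [integral_finset_sum _ (fun j _ => (pi_integrable_mul i j).const_mul _)]
    have hj : ∀ j, ∫ w, L (Pi.single j 1) * (w i * w j) ∂Γ
        = L (Pi.single j 1) * (if i = j then 1 else 0) := by
      intro j
      rw [integral_const_mul, pi_int_mul]
    rw [← hΓ]
    simp_rw [hj]
    simp [mul_ite, mul_one, mul_zero, Finset.sum_ite_eq]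
  have hcong : (fun σ : ℝ => ∫ w, w i * ((F (x + σ • w) - F x) / σ) ∂Γ)
      =ᶠ[𝓝[>] (0:ℝ)]
      (fun σ : ℝ => (1 / σ ^ 2) * ∫ z, z i * F (x + z)
          ∂(Measure.pi fun _ : Fin d => gaussianReal 0 (Real.toNNReal (σ ^ 2)))) := by
    filter_upwards [self_mem_nhdsWithin] with σ hσ
    exact (hstep1 σ hσ).symm
  rw [← hfinal]
  exact Filter.Tendsto.congr' hcong hDCT
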